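/- Let Φ ∈ ℝ^{m×n} have unit-norm columns φ₁,…,φₙ with mutual coherence μ(Φ) = max_{i≠j} |φᵢᵀφⱼ| ≤ 1/f for some f > 1. Let x be s-sparse with support S = {1,…,s}, b = Φx, and let i, j ∉ S, i ≠ j. Then the projection of b onto span{φᵢ, φⱼ} satisfies ‖Proj(b)‖ ≤ (2f + 2)/(f² − 1) · Σ_{k=1}^s |x_k|. -/

import Mathlib

set_option maxHeartbeats 1000000


open RealInnerProductSpace

theorem stmt_12 {m n : ℕ} (φ : Fin n → EuclideanSpace ℝ (Fin m))
    (hnorm : ∀ i, ‖φ i‖ = 1) (f : ℝ) (hf : 1 < f)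
    (hcoh : ∀ i j, i ≠ j → |⟪φ i, φ j⟫| ≤ 1 / f)
    (S : Finset (Fin n)) (x : Fin n → ℝ) (hsupp : ∀ k, k ∉ S → x k = 0)
    (b : EuclideanSpace ℝ (Fin m)) (hb : b = ∑ k ∈ S, x k • φ k)
    (i j : Fin n) (hi : i ∉ S) (hj : j ∉ S) (hij : i ≠ j) :
    ‖(Submodule.orthogonalProjectionOnto
        (Submodule.span ℝ ({φ i, φ j} : Set (EuclideanSpace ℝ (Fin m)))) b :
        EuclideanSpace ℝ (Fin m))‖
      ≤ (2 * f + 2) / (f ^ 2 - 1) * ∑ k ∈ S, |x k| := by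
  set K := Submodule.span ℝ ({φ i, φ j} : Set (EuclideanSpace ℝ (Fin m))) with hK
  set p : EuclideanSpace ℝ (Fin m) := (K.orthogonalProjectionOnto b : EuclideanSpace ℝ (Fin m))
    with hp
  have hpK : p ∈ K := (K.orthogonalProjectionOnto b).2
  obtain ⟨α, β, hab⟩ := Submodule.mem_span_pair.mp hpK
  have hf0 : (0:ℝ) < f := lt_trans one_pos hf
  set T := ∑ k ∈ S, |x k| with hT
  have hT0 : 0 ≤ T := Finset.sum_nonneg fun k _ => abs_nonneg _
  -- ⟪p, b⟫ = ‖p‖^2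
  have hPb : ⟪p, b⟫ = ‖p‖ ^ 2 := by
    have h0 : ⟪b - p, p⟫ = 0 := K.starProjection_inner_eq_zero b p hpK
    rw [inner_sub_left, sub_eq_zero] at h0
    rw [real_inner_comm, h0, real_inner_self_eq_norm_sq]
  -- inner bound for each k in S
  have hkbd : ∀ k ∈ S, |⟪p, φ k⟫| ≤ (|α| + |β|) * (1 / f) := by
    intro k hk
    have hki : k ≠ i := fun h => hi (h ▸ hk)
    have hkj : k ≠ j := fun h => hj (h ▸ hk)
    have h1 : |⟪φ i, φ k⟫| ≤ 1 / f := by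
      rw [real_inner_comm]; exact hcoh k i hki
    have h2 : |⟪φ j, φ k⟫| ≤ 1 / f := by
      rw [real_inner_comm]; exact hcoh k j hkj
    have : ⟪p, φ k⟫ = α * ⟪φ i, φ k⟫ + β * ⟪φ j, φ k⟫ := by
      rw [← hab, inner_add_left, real_inner_smul_left, real_inner_smul_left]
    rw [this]
    calc |α * ⟪φ i, φ k⟫ + β * ⟪φ j, φ k⟫|
        ≤ |α * ⟪φ i, φ k⟫| + |β * ⟪φ j, φ k⟫| := abs_add_le _ _
      _ = |α| * |⟪φ i, φ k⟫| + |β| * |⟪φ j, φ k⟫| := by rw [abs_mul, abs_mul]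
      _ ≤ |α| * (1/f) + |β| * (1/f) := by
          have := mul_le_mul_of_nonneg_left h1 (abs_nonneg α)
          have := mul_le_mul_of_nonneg_left h2 (abs_nonneg β)
          linarith
      _ = (|α| + |β|) * (1 / f) := by ring
  -- ‖p‖² ≤ (|α|+|β|)/f * T
  have hnp2 : ‖p‖ ^ 2 ≤ (|α| + |β|) * (1 / f) * T := by
    rw [← hPb, hb, inner_sum]
    calc ∑ k ∈ S, ⟪p, x k • φ k⟫
        ≤ ∑ k ∈ S, |x k| * ((|α| + |β|) * (1/f)) := by
          apply Finset.sum_le_sum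
          intro k hk
          rw [real_inner_smul_right]
          calc x k * ⟪p, φ k⟫ ≤ |x k * ⟪p, φ k⟫| := le_abs_self _
            _ = |x k| * |⟪p, φ k⟫| := abs_mul _ _
            _ ≤ |x k| * ((|α| + |β|) * (1/f)) := by
                exact mul_le_mul_of_nonneg_left (hkbd k hk) (abs_nonneg _)
      _ = (|α| + |β|) * (1/f) * T := by rw [← Finset.sum_mul]; ring
  -- ‖p‖² ≥ (1-1/f)(α²+β²)
  have hg : |⟪φ i, φ j⟫| ≤ 1 / f := hcoh i j hij
  have hnormp : ‖p‖ ^ 2 = α ^ 2 + β ^ 2 + 2 * α * β * ⟪φ i, φ j⟫ := by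
    rw [← real_inner_self_eq_norm_sq, ← hab]
    rw [inner_add_left, inner_add_right, inner_add_right]
    rw [real_inner_smul_left, real_inner_smul_left, real_inner_smul_left,
      real_inner_smul_left, real_inner_smul_right, real_inner_smul_right,
      real_inner_smul_right, real_inner_smul_right]
    have h1 : ⟪φ i, φ i⟫ = 1 := by
      rw [real_inner_self_eq_norm_sq, hnorm i]; norm_num
    have h2 : ⟪φ j, φ j⟫ = 1 := by
      rw [real_inner_self_eq_norm_sq, hnorm j]; norm_num
    have h3 : ⟪φ j, φ i⟫ = ⟪φ i, φ j⟫ := real_inner_comm _ _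
    rw [h1, h2, h3]; ring
  have hlow : (1 - 1/f) * (α ^ 2 + β ^ 2) ≤ ‖p‖ ^ 2 := by
    rw [hnormp]
    have h1 : -(1/f) ≤ ⟪φ i, φ j⟫ := neg_le_of_abs_le hg
    have h2 : ⟪φ i, φ j⟫ ≤ 1/f := le_of_abs_le hg
    have habs : |2 * α * β| ≤ α ^ 2 + β ^ 2 := by
      rw [abs_le]; constructor <;> nlinarith [sq_nonneg (α + β), sq_nonneg (α - β)]
    have hprod : |2 * α * β * ⟪φ i, φ j⟫| ≤ (α ^ 2 + β ^ 2) * (1/f) := by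
      rw [abs_mul]
      exact mul_le_mul habs hg (abs_nonneg _) (by positivity)
    have := neg_abs_le (2 * α * β * ⟪φ i, φ j⟫)
    nlinarith [this, hprod]
  -- combine
  have hRHS : (2 * f + 2) / (f ^ 2 - 1) = 2 / (f - 1) := by
    rw [div_eq_div_iff (by nlinarith) (by linarith)]
    ring
  rw [hRHS]
  have hN0 : 0 ≤ ‖p‖ := norm_nonneg _
  have hsum2 : (|α| + |β|) ^ 2 ≤ 2 * (α ^ 2 + β ^ 2) := by
    have e1 : (|α| + |β|) ^ 2 = |α| ^ 2 + 2 * |α| * |β| + |β| ^ 2 := by ring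
    have e2 : 2 * |α| * |β| ≤ |α| ^ 2 + |β| ^ 2 := two_mul_le_add_sq _ _
    rw [e1, sq_abs, sq_abs]
    rw [sq_abs, sq_abs] at e2
    linarith
  -- ‖p‖⁴ ≤ 2 (α²+β²) T²/f² and (1-1/f)(α²+β²) ≤ ‖p‖²
  have hfm : (0:ℝ) < 1 - 1/f := by
    rw [sub_pos, div_lt_one hf0]; exact hf
  rcases eq_or_lt_of_le hN0 with h0 | h0
  · rw [← h0]
    exact mul_nonneg (div_nonneg (by norm_num) (by linarith)) hT0
  · -- ‖p‖² ≤ (|α|+|β|) T / f ≤ √2 √(α²+β²) T/f, square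
    have hab0 : 0 ≤ |α| + |β| := by positivity
    have key : ‖p‖ ^ 2 * (1 - 1/f) * f ^ 2 * ‖p‖ ^ 2 ≤ 2 * T ^ 2 * ‖p‖ ^ 2 := by
      have h4 : (‖p‖ ^ 2) ^ 2 ≤ ((|α| + |β|) * (1/f) * T) ^ 2 := by
        apply sq_le_sq' _ hnp2
        nlinarith [mul_nonneg (mul_nonneg hab0 (le_of_lt (one_div_pos.mpr hf0))) hT0,
          sq_nonneg ‖p‖]
      have h5 : ((|α| + |β|) * (1/f) * T) ^ 2 = (|α| + |β|) ^ 2 * T ^ 2 / f ^ 2 := by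
        field_simp
      have hA : ‖p‖ ^ 2 * ‖p‖ ^ 2 * f ^ 2 ≤ (|α| + |β|) ^ 2 * T ^ 2 := by
        rw [h5, le_div_iff₀ (by positivity : (0:ℝ) < f ^ 2)] at h4
        nlinarith [h4]
      have s1 := mul_le_mul_of_nonneg_right hA hfm.le
      have s2 := mul_le_mul_of_nonneg_right
        (mul_le_mul_of_nonneg_right hsum2 (sq_nonneg T)) hfm.le
      have s3 := mul_le_mul_of_nonneg_left hlow (by positivity : (0:ℝ) ≤ 2 * T ^ 2)
      nlinarith [s1, s2, s3]
    have key2 : ‖p‖ ^ 2 * (1 - 1/f) * f ^ 2 ≤ 2 * T ^ 2 := by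
      have hp2 : 0 < ‖p‖ ^ 2 := by positivity
      exact le_of_mul_le_mul_right (by nlinarith) hp2
    -- ‖p‖² ≤ 2T²/((1-1/f)f²) = 2T²/(f(f-1)) ≤ 4T²/(f-1)²
    have hfin : ‖p‖ ^ 2 ≤ (2 / (f - 1) * T) ^ 2 := by
      have hd : (1 - 1/f) * f ^ 2 = f * (f - 1) := by field_simp
      have h6 : ‖p‖ ^ 2 * (f * (f - 1)) ≤ 2 * T ^ 2 := by
        rw [← hd]; linarith [key2]
      have h7 : (2 / (f - 1) * T) ^ 2 = 4 * T ^ 2 / (f - 1) ^ 2 := by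
        field_simp; ring
      rw [h7]
      have hfm1 : (0:ℝ) < f - 1 := by linarith
      rw [le_div_iff₀ (pow_pos hfm1 2)]
      nlinarith [sq_nonneg T, mul_pos hf0 hfm1]
    have hB : 0 ≤ 2 / (f - 1) * T := mul_nonneg (div_nonneg (by norm_num) (by linarith)) hT0
    nlinarith [hfin]
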